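/- Let k ∈ {2, 3, …} or k = ∞, let T > 0 and J = [0, T], let X and Y be real Banach spaces, and let U be an open subset of X. Suppose S : U → Y is k-times continuously (Fréchet) differentiable on U and each derivative S^{(j)} for j = 2, 3, …, k maps bounded subsets of U into bounded sets. Then the set W := {u ∈ C(J; X) : u(t) ∈ U for all t ∈ J} is open in the Banach space C(J; X) of continuous functions with the supremum norm, and the substitution operator Φ : W → C(J; Y), Φ(u) := S ∘ u, is (k−1)-times continuously (Fréchet) differentiable on W. -/

import Mathlib

open Bornology Metric Set
open scoped Classical

section Subst

variable {K : Type*} [TopologicalSpace K] [CompactSpace K]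
variable {X : Type*} [NormedAddCommGroup X] [NormedSpace ℝ X]
variable {E : Type*} [NormedAddCommGroup E] [NormedSpace ℝ E]
variable {U : Set X} {F : X → E}

/-- Nemytskii (substitution) operator, with junk value when the composite is not continuous. -/
noncomputable def substPhi (F : X → E) (u : C(K, X)) : C(K, E) :=
  if h : Continuous fun t => F (u t) then ⟨_, h⟩ else 0

theorem substPhi_apply {u : C(K, X)} (h : Continuous fun t => F (u t)) (t : K) :
    substPhi F u t = F (u t) := by
  rw [substPhi, dif_pos h]
  rfl

theorem substPhi_apply' (hF : ContinuousOn F U) {u : C(K, X)} (hu : ∀ t, u t ∈ U) (t : K) :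
    substPhi F u t = F (u t) :=
  substPhi_apply (hF.comp_continuous u.continuous hu) t

theorem isOpen_substW (hU : IsOpen U) :
    IsOpen {u : C(K, X) | ∀ t, u t ∈ U} := by
  rw [Metric.isOpen_iff]
  intro u hu
  obtain ⟨δ, hδ, hsub⟩ := (isCompact_range u.continuous).exists_thickening_subset_open hU
    (range_subset_iff.2 hu)
  refine ⟨δ, hδ, fun v hv t => ?_⟩
  refine hsub (mem_thickening_iff.2 ⟨u t, mem_range_self t, ?_⟩)
  exact lt_of_le_of_lt (ContinuousMap.dist_apply_le_dist t) hv

/-- Uniform continuity of `F` along the compact image of `u`. -/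
theorem subst_unif (hU : IsOpen U) (hF : ContinuousOn F U) {u : C(K, X)}
    (hu : ∀ t, u t ∈ U) {ε : ℝ} (hε : 0 < ε) :
    ∃ δ > 0, ∀ (t : K) (x : X), dist x (u t) < δ →
      x ∈ U ∧ dist (F x) (F (u t)) < ε := by
  obtain ⟨δ₁, hδ₁, hsub⟩ := (isCompact_range u.continuous).exists_thickening_subset_open hU
    (range_subset_iff.2 hu)
  have hcomp : IsCompact (range u) := isCompact_range u.continuous
  have hca : ∀ a ∈ range u, ContinuousAt F a := by
    rintro a ⟨t, rfl⟩
    exact hF.continuousAt (hU.mem_nhds (hu t))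
  have hmem : {p : X × X | p.1 ∈ range u → (F p.1, F p.2) ∈ {q : E × E | dist q.1 q.2 < ε}} ∈
      uniformity X :=
    hcomp.uniformContinuousAt_of_continuousAt F hca (dist_mem_uniformity hε)
  obtain ⟨δ₂, hδ₂, hδ₂'⟩ := Metric.mem_uniformity_dist.1 hmem
  refine ⟨min δ₁ δ₂, lt_min hδ₁ hδ₂, fun t x hx => ?_⟩
  constructor
  · exact hsub (mem_thickening_iff.2 ⟨u t, mem_range_self t, hx.trans_le (min_le_left _ _)⟩)
  · have : dist (u t) x < δ₂ := by rw [dist_comm]; exact hx.trans_le (min_le_right _ _)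
    have := hδ₂' this (mem_range_self t)
    simpa [dist_comm] using this

theorem continuousOn_substPhi (hU : IsOpen U) (hF : ContinuousOn F U) :
    ContinuousOn (substPhi F : C(K, X) → C(K, E)) {u : C(K, X) | ∀ t, u t ∈ U} := by
  intro u hu
  apply ContinuousAt.continuousWithinAt
  rw [Metric.continuousAt_iff]
  intro ε hε
  obtain ⟨δ, hδ, h⟩ := subst_unif hU hF hu (half_pos hε)
  refine ⟨δ, hδ, fun {v} hv => ?_⟩
  have hvt : ∀ t, dist (v t) (u t) < δ :=
    fun t => lt_of_le_of_lt (ContinuousMap.dist_apply_le_dist t) hv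
  have hvU : ∀ t, v t ∈ U := fun t => (h t (v t) (hvt t)).1
  have : dist (substPhi F v) (substPhi F u) ≤ ε / 2 := by
    rw [ContinuousMap.dist_le (half_pos hε).le]
    intro t
    rw [substPhi_apply' hF hvU, substPhi_apply' hF hu]
    exact (h t (v t) (hvt t)).2.le
  exact lt_of_le_of_lt this (half_lt_self hε)

/-- Pointwise application of an operator-valued continuous map, as a continuous linear map. -/
noncomputable def substApply₁ (g : C(K, X →L[ℝ] E)) : C(K, X) →L[ℝ] C(K, E) :=
  LinearMap.mkContinuous
    { toFun := fun h => ⟨fun t => g t (h t),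
        isBoundedBilinearMap_apply.continuous.comp (g.continuous.prodMk h.continuous)⟩
      map_add' := fun h₁ h₂ => by ext t; simp
      map_smul' := fun c h => by ext t; simp }
    ‖g‖ (fun h => by
      have key : ∀ t : K, ‖g t (h t)‖ ≤ ‖g‖ * ‖h‖ := fun t =>
        calc ‖g t (h t)‖ ≤ ‖g t‖ * ‖h t‖ := (g t).le_opNorm (h t)
          _ ≤ ‖g‖ * ‖h‖ := mul_le_mul (g.norm_coe_le_norm t) (h.norm_coe_le_norm t)
              (norm_nonneg _) ((norm_nonneg (g t)).trans (g.norm_coe_le_norm t))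
      exact (ContinuousMap.norm_le _ (mul_nonneg (norm_nonneg g) (norm_nonneg h))).mpr key)

theorem substApply₁_apply (g : C(K, X →L[ℝ] E)) (h : C(K, X)) (t : K) :
    substApply₁ g h t = g t (h t) := rfl

theorem norm_substApply₁_le (g : C(K, X →L[ℝ] E)) : ‖substApply₁ g‖ ≤ ‖g‖ :=
  LinearMap.mkContinuous_norm_le _ (norm_nonneg g) _

theorem isBoundedLinearMap_substApply₁ :
    IsBoundedLinearMap ℝ (fun g : C(K, X →L[ℝ] E) => substApply₁ g) := by
  refine ⟨⟨fun g₁ g₂ => ?_, fun c g => ?_⟩, 1, one_pos, fun g => by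
    rw [one_mul]; exact norm_substApply₁_le g⟩
  · exact ContinuousLinearMap.ext fun h => ContinuousMap.ext fun t => rfl
  · exact ContinuousLinearMap.ext fun h => ContinuousMap.ext fun t => rfl


theorem hasFDerivAt_substPhi (hU : IsOpen U) (hF : ContDiffOn ℝ 1 F U) {u : C(K, X)}
    (hu : ∀ t, u t ∈ U) :
    HasFDerivAt (substPhi F) (substApply₁ (substPhi (fderiv ℝ F) u)) u := by
  have hG : ContinuousOn (fderiv ℝ F) U := hF.continuousOn_fderiv_of_isOpen hU le_rfl
  have hFc : ContinuousOn F U := hF.continuousOn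
  rw [hasFDerivAt_iff_isLittleO_nhds_zero, Asymptotics.isLittleO_iff]
  intro c hc
  obtain ⟨δ, hδ, h⟩ := subst_unif hU hG hu hc
  filter_upwards [Metric.ball_mem_nhds (0 : C(K, X)) hδ] with v hv
  rw [Metric.mem_ball, dist_zero_right] at hv
  have hvt : ∀ t, ‖v t‖ < δ := fun t => lt_of_le_of_lt (v.norm_coe_le_norm t) hv
  have hmem : ∀ t, ∀ x ∈ Metric.ball (u t) δ, x ∈ U := fun t x hx =>
    (h t x (Metric.mem_ball.1 hx)).1
  have huv : ∀ t, (u + v) t ∈ U := by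
    intro t
    refine hmem t _ ?_
    rw [Metric.mem_ball, ContinuousMap.add_apply, dist_eq_norm]
    simpa using hvt t
  have key : ∀ t : K, ‖F (u t + v t) - F (u t) - fderiv ℝ F (u t) (v t)‖ ≤ c * ‖v‖ := by
    intro t
    have hdiff : ∀ x ∈ Metric.ball (u t) δ, DifferentiableAt ℝ F x := fun x hx =>
      (hF.differentiableOn one_ne_zero).differentiableAt (hU.mem_nhds (hmem t x hx))
    have hbound : ∀ x ∈ Metric.ball (u t) δ, ‖fderiv ℝ F x - fderiv ℝ F (u t)‖ ≤ c := by
      intro x hx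
      have h2 := (h t x (Metric.mem_ball.1 hx)).2
      rw [dist_eq_norm] at h2
      exact h2.le
    have hx : u t ∈ Metric.ball (u t) δ := Metric.mem_ball_self hδ
    have hy : u t + v t ∈ Metric.ball (u t) δ := by
      rw [Metric.mem_ball, dist_eq_norm]; simpa using hvt t
    have mv := (convex_ball (u t) δ).norm_image_sub_le_of_norm_fderiv_le' hdiff hbound hx hy
    have h3 : u t + v t - u t = v t := by abel
    rw [h3] at mv
    exact mv.trans (by
      have h4 : ‖v t‖ ≤ ‖v‖ := v.norm_coe_le_norm t
      nlinarith [norm_nonneg (v t), hc.le])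
  rw [ContinuousMap.norm_le _ (mul_nonneg hc.le (norm_nonneg v))]
  intro t
  simp only [ContinuousMap.sub_apply, substApply₁_apply]
  rw [substPhi_apply' hFc huv t, substPhi_apply' hFc hu t, substPhi_apply' hG hu t,
    ContinuousMap.add_apply]
  exact key t


theorem substDown_isBoundedLinearMap {Y : Type*} [NormedAddCommGroup Y] [NormedSpace ℝ Y] :
    IsBoundedLinearMap ℝ (fun f : C(K, ULift.{u} Y) =>
      (⟨fun t => (f t).down, continuous_uliftDown.comp f.continuous⟩ : C(K, Y))) := by
  refine ⟨⟨fun f g => ?_, fun c f => ?_⟩, 1, one_pos, fun f => ?_⟩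
  · ext t; rfl
  · ext t; rfl
  · rw [one_mul, ContinuousMap.norm_le _ (norm_nonneg f)]
    intro t
    exact le_trans (le_of_eq rfl) (f.norm_coe_le_norm t)

end Subst

universe uK uX uE

theorem contDiffOn_substPhi {K : Type uK} [TopologicalSpace K] [CompactSpace K]
    {X : Type uX} [NormedAddCommGroup X] [NormedSpace ℝ X]
    {U : Set X} (hU : IsOpen U) (n : ℕ) :
    ∀ {E : Type (max uX uE)} [NormedAddCommGroup E] [NormedSpace ℝ E] (F : X → E),
      ContDiffOn ℝ n F U →
      ContDiffOn ℝ n (substPhi F : C(K, X) → C(K, E)) {u : C(K, X) | ∀ t, u t ∈ U} := by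
  induction n with
  | zero =>
    intro E _ _ F hF
    rw [Nat.cast_zero, contDiffOn_zero]
    exact continuousOn_substPhi hU hF.continuousOn
  | succ n ih =>
    intro E _ _ F hF
    have hW := isOpen_substW (K := K) hU
    have h1 : ContDiffOn ℝ 1 F U := hF.of_le (by exact_mod_cast Nat.one_le_iff_ne_zero.2 (Nat.succ_ne_zero n))
    have hderiv : ∀ u ∈ {u : C(K, X) | ∀ t, u t ∈ U},
        HasFDerivAt (substPhi F) (substApply₁ (substPhi (fderiv ℝ F) u)) u :=
      fun u hu => hasFDerivAt_substPhi hU h1 hu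
    have hcast : ((n + 1 : ℕ) : WithTop ℕ∞) = (n : WithTop ℕ∞) + 1 := by
      push_cast; rfl
    rw [hcast, contDiffOn_succ_iff_fderiv_of_isOpen hW]
    refine ⟨fun u hu => (hderiv u hu).differentiableAt.differentiableWithinAt, ?_, ?_⟩
    · intro h; simp at h
    · have hG : ContDiffOn ℝ n (fderiv ℝ F) U :=
        hF.fderiv_of_isOpen hU (le_of_eq hcast.symm)
      have hbl : IsBoundedLinearMap ℝ (fun g : C(K, X →L[ℝ] E) => substApply₁ g) :=
        ⟨⟨fun g₁ g₂ => ContinuousLinearMap.ext fun h => ContinuousMap.ext fun t => rfl,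
          fun c g => ContinuousLinearMap.ext fun h => ContinuousMap.ext fun t => rfl⟩,
          1, one_pos, fun g => by rw [one_mul]; exact norm_substApply₁_le g⟩
      have hcomp := (hbl.contDiff).comp_contDiffOn (ih (fderiv ℝ F) hG)
      exact hcomp.congr fun u hu => (hderiv u hu).fderiv


theorem contDiffOn_substPhi' {K : Type uK} [TopologicalSpace K] [CompactSpace K]
    {X : Type uX} [NormedAddCommGroup X] [NormedSpace ℝ X]
    {Y : Type uY} [NormedAddCommGroup Y] [NormedSpace ℝ Y]
    {U : Set X} (hU : IsOpen U) (n : ℕ) {S : X → Y} (hSc : ContinuousOn S U)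
    (hSn : ContDiffOn ℝ n S U) :
    ContDiffOn ℝ n (substPhi S : C(K, X) → C(K, Y)) {u : C(K, X) | ∀ t, u t ∈ U} := by
  have hup : IsBoundedLinearMap ℝ (fun y : Y => ULift.up.{uX} y) :=
    ⟨⟨fun a b => rfl, fun c a => rfl⟩, 1, one_pos, fun y => by simp⟩
  have hS' : ContDiffOn ℝ n (fun x => ULift.up.{uX} (S x)) U :=
    (hup.contDiff).comp_contDiffOn hSn
  have key := contDiffOn_substPhi (K := K) hU n _ hS'
  have hdown := (substDown_isBoundedLinearMap (K := K)
    (Y := Y)).contDiff.comp_contDiffOn key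
  refine hdown.congr fun u hu => ?_
  ext t
  have hc : ContinuousOn (fun x => ULift.up.{uX} (S x) : X → ULift Y) U :=
    continuous_uliftUp.comp_continuousOn hSc
  simp only [Function.comp_apply, ContinuousMap.coe_mk]
  rw [substPhi_apply' hSc hu t, substPhi_apply' hc hu t]

open Bornology

/-- Lemma 3.2 of the paper: if `S : U → Y` is `C^k` (`2 ≤ k ≤ ∞`) on an open set `U ⊆ X` and
each derivative `S⁽ʲ⁾`, `2 ≤ j ≤ k`, maps bounded sets into bounded sets, then the set
`W = {u ∈ C(J; X) : u(J) ⊆ U}` is open in `C(J; X)` (`J = [0, T]` compact, sup norm) and the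
substitution operator `u ↦ S ∘ u : W → C(J; Y)` is of class `C^{k-1}`. -/
theorem substitution_operator_smooth
    {X Y : Type*} [NormedAddCommGroup X] [NormedSpace ℝ X]
    [NormedAddCommGroup Y] [NormedSpace ℝ Y]
    (k : ℕ∞) (hk : 2 ≤ k) (T : ℝ) (hT : 0 < T)
    (U : Set X) (hU : IsOpen U) (S : X → Y)
    (hS : ContDiffOn ℝ k S U)
    (hbdd : ∀ j : ℕ, 2 ≤ j → (j : ℕ∞) ≤ k → ∀ s ⊆ U, IsBounded s →
      IsBounded (iteratedFDerivWithin ℝ j S U '' s)) :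
    IsOpen {u : C(Set.Icc (0 : ℝ) T, X) | ∀ t, u t ∈ U} ∧
    ∃ Φ : C(Set.Icc (0 : ℝ) T, X) → C(Set.Icc (0 : ℝ) T, Y),
      (∀ u : C(Set.Icc (0 : ℝ) T, X), (∀ t, u t ∈ U) → ∀ t, Φ u t = S (u t)) ∧
      ContDiffOn ℝ (k - 1) Φ {u : C(Set.Icc (0 : ℝ) T, X) | ∀ t, u t ∈ U} := by
  refine ⟨isOpen_substW hU, substPhi S,
    fun u hu t => substPhi_apply' hS.continuousOn hu t, ?_⟩
  have main : ∀ n : ℕ, (n : ℕ∞) ≤ k →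
      ContDiffOn ℝ n (substPhi S : C(Set.Icc (0 : ℝ) T, X) → C(Set.Icc (0 : ℝ) T, Y))
        {u : C(Set.Icc (0 : ℝ) T, X) | ∀ t, u t ∈ U} := by
    intro n hn
    exact contDiffOn_substPhi' hU n hS.continuousOn (hS.of_le (by exact_mod_cast hn))
  induction k using ENat.recTopCoe with
  | top =>
    have h0 : ((⊤:ℕ∞) : WithTop ℕ∞) - 1 = ((⊤:ℕ∞) : WithTop ℕ∞) := by norm_cast
    rw [h0]
    exact contDiffOn_infty.2 fun n => main n le_top
  | coe m =>
    have h2 : 2 ≤ m := by exact_mod_cast hk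
    have h1 : (((m:ℕ∞)) : WithTop ℕ∞) - 1 = (((m - 1 : ℕ) : ℕ∞) : WithTop ℕ∞) := by
      have h3 : 1 ≤ m := by omega
      push_cast [Nat.cast_sub h3]
      norm_cast
    rw [h1]
    exact main (m - 1) (by exact_mod_cast Nat.sub_le m 1)
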